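/- Let 𝔊 be a Lie algebra over a field K and I ⊆ 𝔊 an ideal. Let U and U' be 𝔊/I-modules (regarded as 𝔊-modules on which I acts trivially), and let W be a 𝔊-module such that: (i) I acts densely on W, meaning for any finitely many w_1,…,w_n ∈ W and any g ∈ 𝔊 there is g' ∈ I with g'w_i = gw_i for all i; (ii) W is irreducible as an I-module; (iii) End_I(W) = K (every I-module endomorphism of W is a scalar). Then every 𝔊-module homomorphism f : U ⊗ W → U' ⊗ W is of the form g ⊗ id_W for a unique 𝔊-module homomorphism g : U → U'; in particular Hom_𝔊(U ⊗ W, U' ⊗ W) ≅ Hom_𝔊(U, U'). -/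

import Mathlib

open scoped TensorProduct

/-- Separation: if all contractions with dual functionals on the left factor
vanish, the tensor is zero. -/
theorem sep_aux {K V W : Type*} [Field K] [AddCommGroup V] [Module K V]
    [AddCommGroup W] [Module K W] (t : V ⊗[K] W)
    (h : ∀ ψ : V →ₗ[K] K,
      (TensorProduct.lid K W) (TensorProduct.map ψ LinearMap.id t) = 0) :
    t = 0 := by
  classical
  set bV := Module.Basis.ofVectorSpace K V
  set bW := Module.Basis.ofVectorSpace K W
  set B := bV.tensorProduct bW with hB
  have key : ∀ (s : V ⊗[K] W) j k, B.repr s (j, k) =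
      bW.repr ((TensorProduct.lid K W)
        (TensorProduct.map (bV.coord j) LinearMap.id s)) k := by
    intro s
    induction s using TensorProduct.induction_on with
    | zero => simp
    | tmul v w =>
        intro j k
        simp [hB, Module.Basis.tensorProduct_repr_tmul_apply, Module.Basis.coord_apply,
          mul_comm, smul_eq_mul]
    | add s₁ s₂ h₁ h₂ =>
        intro j k
        simp [map_add, h₁ j k, h₂ j k]
  have ht : B.repr t = 0 := by
    ext jk
    obtain ⟨j, k⟩ := jk
    rw [key t j k, h (bV.coord j)]
    simp
  have := B.repr.injective (by simpa using ht)
  simpa using this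

/-- Let `𝔊` be a Lie algebra over `K` (char 0) and `I ⊆ 𝔊` an ideal; let `U`, `U'` be
`𝔊`-modules on which `I` acts trivially (i.e. `𝔊/I`-modules) and `W` a `𝔊`-module on
which `I` acts densely and irreducibly with `End_I(W) = K`. Then every `𝔊`-module map
`f : U ⊗ W → U' ⊗ W` equals `g ⊗ id_W` for a unique `𝔊`-module map `g : U → U'`. -/
theorem stmt_2 (K : Type*) [Field K] [CharZero K]
    (L : Type*) [LieRing L] [LieAlgebra K L] (I : LieIdeal K L)
    (U U' W : Type*)
    [AddCommGroup U] [Module K U] [LieRingModule L U] [LieModule K L U]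
    [AddCommGroup U'] [Module K U'] [LieRingModule L U'] [LieModule K L U']
    [AddCommGroup W] [Module K W] [LieRingModule L W] [LieModule K L W]
    -- `I` acts trivially on `U` and `U'`:
    (hU : ∀ x : L, x ∈ I → ∀ u : U, ⁅x, u⁆ = 0)
    (hU' : ∀ x : L, x ∈ I → ∀ u : U', ⁅x, u⁆ = 0)
    -- `I` acts densely on `W`:
    (hdense : ∀ (n : ℕ) (w : Fin n → W) (g : L), ∃ g' : L, g' ∈ I ∧
      ∀ i : Fin n, ⁅g', w i⁆ = ⁅g, w i⁆)
    -- `W` is irreducible as an `I`-module: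
    (hW : Nontrivial W)
    (hirr : ∀ p : Submodule K W, (∀ x : L, x ∈ I → ∀ w ∈ p, ⁅x, w⁆ ∈ p) →
      p = ⊥ ∨ p = ⊤)
    -- `End_I(W) = K`:
    (hend : ∀ φ : W →ₗ[K] W, (∀ x : L, x ∈ I → ∀ w : W, φ ⁅x, w⁆ = ⁅x, φ w⁆) →
      ∃ c : K, φ = c • LinearMap.id)
    -- a `𝔊`-module homomorphism `f : U ⊗ W → U' ⊗ W`:
    (f : U ⊗[K] W →ₗ[K] U' ⊗[K] W)
    (hf : ∀ g : L,
      f ∘ₗ (TensorProduct.map (LieModule.toEnd K L U g) LinearMap.id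
              + TensorProduct.map LinearMap.id (LieModule.toEnd K L W g))
        = (TensorProduct.map (LieModule.toEnd K L U' g) LinearMap.id
              + TensorProduct.map LinearMap.id (LieModule.toEnd K L W g)) ∘ₗ f) :
    ∃! g : U →ₗ[K] U',
      (∀ (x : L) (u : U), g ⁅x, u⁆ = ⁅x, g u⁆) ∧
        f = TensorProduct.map g LinearMap.id := by
  classical
  -- fix a nonzero vector `w₀` and a dual functional `χ` with `χ w₀ = 1`
  obtain ⟨w₀, hw₀⟩ := exists_ne (0 : W)
  obtain ⟨χ₀, hχ₀⟩ : ∃ χ₀ : W →ₗ[K] K, χ₀ w₀ ≠ 0 := by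
    by_contra h
    push_neg at h
    exact hw₀ ((Module.forall_dual_apply_eq_zero_iff K w₀).mp h)
  set χ : W →ₗ[K] K := (χ₀ w₀)⁻¹ • χ₀ with hχdef
  have hχ : χ w₀ = 1 := by
    simp [hχdef, inv_mul_cancel₀ hχ₀]
  -- the contraction maps
  set π : (U' →ₗ[K] K) → (U' ⊗[K] W →ₗ[K] W) := fun ψ =>
    (TensorProduct.lid K W).toLinearMap ∘ₗ TensorProduct.map ψ LinearMap.id
    with hπdef
  have πtmul : ∀ (ψ : U' →ₗ[K] K) (u' : U') (w : W),
      π ψ (u' ⊗ₜ w) = ψ u' • w := by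
    intro ψ u' w
    simp [hπdef]
  have πnat : ∀ (ψ : U' →ₗ[K] K) (A : W →ₗ[K] W) (t : U' ⊗[K] W),
      π ψ (TensorProduct.map LinearMap.id A t) = A (π ψ t) := by
    intro ψ A t
    induction t using TensorProduct.induction_on with
    | zero => simp
    | tmul u' w => simp [πtmul]
    | add t₁ t₂ h₁ h₂ => simp [map_add, h₁, h₂]
  -- `I` acts on `U ⊗ W` and `U' ⊗ W` only through `W`
  have hI : ∀ x ∈ I, ∀ (u : U) (w : W),
      f (u ⊗ₜ ⁅x, w⁆) =
        TensorProduct.map LinearMap.id (LieModule.toEnd K L W x) (f (u ⊗ₜ w)) := by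
    intro x hx u w
    have h1 := LinearMap.congr_fun (hf x) (u ⊗ₜ[K] w)
    have hzU : LieModule.toEnd K L U x = 0 := LinearMap.ext fun u => hU x hx u
    have hzU' : LieModule.toEnd K L U' x = 0 := LinearMap.ext fun u => hU' x hx u
    have hmz : TensorProduct.map (0 : U' →ₗ[K] U')
        (LinearMap.id : W →ₗ[K] W) = 0 := by
      apply TensorProduct.ext'
      intro u' w
      simp
    simp only [LinearMap.comp_apply, LinearMap.add_apply, TensorProduct.map_tmul,
      LinearMap.id_apply, hzU, hzU', hmz, LinearMap.zero_apply,
      TensorProduct.zero_tmul, map_zero, zero_add] at h1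
    simpa [LieModule.toEnd_apply_apply] using h1
  -- the key scalar identity
  have hscal : ∀ (u : U) (ψ : U' →ₗ[K] K) (w : W),
      π ψ (f (u ⊗ₜ w)) = χ (π ψ (f (u ⊗ₜ w₀))) • w := by
    intro u ψ
    set φ : W →ₗ[K] W := π ψ ∘ₗ f ∘ₗ (TensorProduct.mk K U W u) with hφdef
    have hφ : ∀ x ∈ I, ∀ w : W, φ ⁅x, w⁆ = ⁅x, φ w⁆ := by
      intro x hx w
      simp only [hφdef, LinearMap.comp_apply, TensorProduct.mk_apply]
      rw [hI x hx u w, πnat]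
      simp [LieModule.toEnd_apply_apply]
    obtain ⟨c, hc⟩ := hend φ (fun x hx w => hφ x hx w)
    intro w
    have h1 : ∀ w : W, π ψ (f (u ⊗ₜ w)) = c • w := by
      intro w
      have := LinearMap.congr_fun hc w
      simpa [hφdef] using this
    have h0 : χ (π ψ (f (u ⊗ₜ w₀))) = c := by
      rw [h1 w₀]
      simp [hχ]
    rw [h0, h1 w]
  -- define `g`
  set g : U →ₗ[K] U' :=
    ((TensorProduct.rid K U').toLinearMap ∘ₗ TensorProduct.map LinearMap.id χ)
      ∘ₗ f ∘ₗ (TensorProduct.mk K U W).flip w₀ with hgdef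
  have hgu : ∀ (ψ : U' →ₗ[K] K) (t : U' ⊗[K] W),
      ψ ((TensorProduct.rid K U') (TensorProduct.map LinearMap.id χ t))
        = χ (π ψ t) := by
    intro ψ t
    induction t using TensorProduct.induction_on with
    | zero => simp
    | tmul u' w => simp [πtmul, mul_comm]
    | add t₁ t₂ h₁ h₂ => simp [map_add, h₁, h₂]
  -- `f (u ⊗ w) = g u ⊗ w`
  have hg : ∀ (u : U) (w : W), f (u ⊗ₜ w) = g u ⊗ₜ w := by
    intro u w
    have hsep : ∀ ψ : U' →ₗ[K] K,
        (TensorProduct.lid K W) (TensorProduct.map ψ LinearMap.id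
          (f (u ⊗ₜ w) - g u ⊗ₜ w)) = 0 := by
      intro ψ
      have e1 : π ψ (f (u ⊗ₜ w)) = π ψ (g u ⊗ₜ w) := by
        rw [πtmul]
        have : ψ (g u) = χ (π ψ (f (u ⊗ₜ w₀))) := by
          simp only [hgdef, LinearMap.comp_apply, LinearMap.flip_apply,
            TensorProduct.mk_apply]
          exact hgu ψ (f (u ⊗ₜ w₀))
        rw [this, hscal u ψ w]
      have := sub_eq_zero_of_eq e1
      simpa [hπdef, map_sub] using this
    have := sep_aux _ hsep
    exact sub_eq_zero.mp this
  have hfmap : f = TensorProduct.map g LinearMap.id := by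
    apply TensorProduct.ext'
    intro u w
    simpa using hg u w
  -- injectivity of `· ⊗ w₀`
  have tinj : ∀ u' : U', u' ⊗ₜ[K] w₀ = 0 → u' = 0 := by
    intro u' h
    rw [← Module.forall_dual_apply_eq_zero_iff K u']
    intro ψ
    have := congrArg (π ψ) h
    rw [πtmul, map_zero] at this
    exact (smul_eq_zero.mp this).resolve_right hw₀
  -- equivariance of `g`
  have hgeq : ∀ (x : L) (u : U), g ⁅x, u⁆ = ⁅x, g u⁆ := by
    intro x u
    have h1 := LinearMap.congr_fun (hf x) (u ⊗ₜ[K] w₀)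
    rw [hfmap] at h1
    simp only [LinearMap.comp_apply, LinearMap.add_apply, TensorProduct.map_tmul,
      LinearMap.id_apply, map_add, LieModule.toEnd_apply_apply] at h1
    have h2 : (g ⁅x, u⁆ - ⁅x, g u⁆) ⊗ₜ[K] w₀ = 0 := by
      rw [TensorProduct.sub_tmul]
      rw [sub_eq_zero]
      have := h1
      -- h1 : g ⁅x,u⁆ ⊗ w₀ + g u ⊗ ⁅x,w₀⁆ = ⁅x, g u⁆ ⊗ w₀ + g u ⊗ ⁅x,w₀⁆
      exact add_right_cancel this
    have := tinj _ h2
    exact sub_eq_zero.mp this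
  refine ⟨g, ⟨hgeq, hfmap⟩, ?_⟩
  rintro g' ⟨-, hg'⟩
  apply LinearMap.ext
  intro u
  have h1 : g' u ⊗ₜ[K] w₀ = g u ⊗ₜ[K] w₀ := by
    have := LinearMap.congr_fun (hg'.symm.trans hfmap) (u ⊗ₜ[K] w₀)
    simpa using this
  have h2 : (g' u - g u) ⊗ₜ[K] w₀ = 0 := by
    rw [TensorProduct.sub_tmul, sub_eq_zero]
    exact h1
  exact sub_eq_zero.mp (tinj _ h2)
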